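/- Invariant of the belief-state run (key claim in the proof of Theorem 1): let φ be an LTLf formula over P with P = P_o ⊎ P_u, let σ_o ∈ (B^{P_o})^n, and define the run s_0 = φ and s_{k+1} = the formula component of fpObs(s_k, σ_o(k)) for 0 ≤ k < n. Then for every 0 ≤ t < n and every word τ ∈ (B^P)^{n−t} with τ|_{P_o} = σ_o(t..): τ,0 ⊨ s_t if and only if for every sequence (w_u^0, …, w_u^{t−1}) ∈ (B^{P_u})^t, the concatenated word (σ_o(..t−1) ⊔ (w_u^0 ⋯ w_u^{t−1})) · τ satisfies φ at position 0. -/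

import Mathlib

/-- LTLf formulas over atomic propositions `P`.  `next` is the weak next `X`,
`snext` is the strong next `X[!]`, `fin` is `F`, `glob` is `G`,
`untl` is `U` and `rels` is `R`. -/
inductive LTLf (P : Type) : Type
  | tt : LTLf P
  | ff : LTLf P
  | atom : P → LTLf P
  | not : LTLf P → LTLf P
  | and : LTLf P → LTLf P → LTLf P
  | or : LTLf P → LTLf P → LTLf P
  | next : LTLf P → LTLf P
  | snext : LTLf P → LTLf P
  | fin : LTLf P → LTLf P
  | glob : LTLf P → LTLf P
  | untl : LTLf P → LTLf P → LTLf P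
  | rels : LTLf P → LTLf P → LTLf P

namespace LTLf

variable {P O U : Type}

/-- Standard LTLf satisfaction `σ, i ⊨ φ` on finite traces.  A word is a list of
Boolean assignments; positions out of range never occur in the statements. -/
def Sat (σ : List (P → Bool)) : ℕ → LTLf P → Prop
  | _, tt => True
  | _, ff => False
  | i, atom p => (σ.getD i (fun _ => false)) p = true
  | i, not φ => ¬ Sat σ i φ
  | i, and φ ψ => Sat σ i φ ∧ Sat σ i ψ
  | i, or φ ψ => Sat σ i φ ∨ Sat σ i ψ
  | i, next φ => i + 1 = σ.length ∨ Sat σ (i + 1) φ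
  | i, snext φ => i + 1 < σ.length ∧ Sat σ (i + 1) φ
  | i, fin φ => ∃ j, i ≤ j ∧ j < σ.length ∧ Sat σ j φ
  | i, glob φ => ∀ j, i ≤ j → j < σ.length → Sat σ j φ
  | i, untl φ ψ =>
      ∃ j, i ≤ j ∧ j < σ.length ∧ Sat σ j ψ ∧ ∀ k, i ≤ k → k < j → Sat σ k φ
  | i, rels φ ψ =>
      ∀ j, i ≤ j → j < σ.length → (Sat σ j ψ ∨ ∃ k, i ≤ k ∧ k < j ∧ Sat σ k φ)

/-- Boolean connectives lifted componentwise to (formula, flag) pairs. -/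
def pnot (x : LTLf P × Bool) : LTLf P × Bool := (not x.1, !x.2)

def pand (x y : LTLf P × Bool) : LTLf P × Bool := (and x.1 y.1, x.2 && y.2)

def por (x y : LTLf P × Bool) : LTLf P × Bool := (or x.1 y.1, x.2 || y.2)

/-- Formula progression: given a formula and an assignment, return the
progressed formula together with the acceptance flag. -/
def fp (w : P → Bool) : LTLf P → LTLf P × Bool
  | tt => (tt, true)
  | ff => (ff, false)
  | atom p => if w p = true then (tt, true) else (ff, false)
  | not φ => pnot (fp w φ)
  | and φ ψ => pand (fp w φ) (fp w ψ)
  | or φ ψ => por (fp w φ) (fp w ψ)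
  | next φ => (φ, true)
  | snext φ => (φ, false)
  | fin φ => por (fp w φ) (fin φ, false)
  | glob φ => pand (fp w φ) (glob φ, true)
  | untl φ ψ => por (fp w ψ) (pand (fp w φ) (untl φ ψ, false))
  | rels φ ψ => pand (fp w ψ) (por (fp w φ) (rels φ ψ, true))

/-- Progression iterated over a nonempty word `w :: ws`. -/
def fpWord (φ : LTLf P) (w : P → Bool) : List (P → Bool) → LTLf P × Bool
  | [] => fp w φ
  | w' :: ws => fpWord (fp w φ).1 w' ws

/-- Propositional (Boolean) evaluation of a formula, treating atomic
propositions and maximal temporal subformulas as Boolean variables valued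
by `v`. -/
def propEval (v : LTLf P → Bool) : LTLf P → Bool
  | tt => true
  | ff => false
  | not φ => !(propEval v φ)
  | and φ ψ => propEval v φ && propEval v ψ
  | or φ ψ => propEval v φ || propEval v ψ
  | φ => v φ

/-- Propositional equivalence `φ ∼ ψ`. -/
def propEquiv (φ ψ : LTLf P) : Prop :=
  ∀ v : LTLf P → Bool, propEval v φ = propEval v ψ

/-- The `∼`-equivalence class `[φ]_∼` of a formula. -/
def pcls (φ : LTLf P) : Set (LTLf P) := { ψ | propEquiv φ ψ }

/-- The set of subformulas of a formula. -/
def sf : LTLf P → Set (LTLf P)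
  | tt => {tt}
  | ff => {ff}
  | atom p => {atom p}
  | not φ => insert (not φ) (sf φ)
  | and φ ψ => insert (and φ ψ) (sf φ ∪ sf ψ)
  | or φ ψ => insert (or φ ψ) (sf φ ∪ sf ψ)
  | next φ => insert (next φ) (sf φ)
  | snext φ => insert (snext φ) (sf φ)
  | fin φ => insert (fin φ) (sf φ)
  | glob φ => insert (glob φ) (sf φ)
  | untl φ ψ => insert (untl φ ψ) (sf φ ∪ sf ψ)
  | rels φ ψ => insert (rels φ ψ) (sf φ ∪ sf ψ)

/-- The Boolean closure of a set of formulas: the smallest set containing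
`X ∪ {tt, ff}` and closed under `¬`, `∧`, `∨`. -/
inductive BC {P : Type} (X : Set (LTLf P)) : LTLf P → Prop
  | base {φ : LTLf P} : φ ∈ X → BC X φ
  | tt' : BC X LTLf.tt
  | ff' : BC X LTLf.ff
  | not' {φ : LTLf P} : BC X φ → BC X (LTLf.not φ)
  | and' {φ ψ : LTLf P} : BC X φ → BC X ψ → BC X (LTLf.and φ ψ)
  | or' {φ ψ : LTLf P} : BC X φ → BC X ψ → BC X (LTLf.or φ ψ)

/-- A formula which is an atomic proposition or has a temporal operator as its
outermost connective. -/
def isAtomicOrTemporal : LTLf P → Prop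
  | atom _ => True
  | next _ => True
  | snext _ => True
  | fin _ => True
  | glob _ => True
  | untl _ _ => True
  | rels _ _ => True
  | _ => False

/-- Observable progression: progress with respect to an observable assignment
`wo ∈ B^{P_o}`, taking the (componentwise) conjunction of `fp` over all full
assignments compatible with `wo` (i.e. over all assignments of the
unobservable variables `U`). -/
noncomputable def fpObs [Fintype U] [DecidableEq U] (ψ : LTLf (O ⊕ U)) (wo : O → Bool) :
    LTLf (O ⊕ U) × Bool :=
  (((Finset.univ : Finset (U → Bool)).toList.map
      (fun wu => fp (Sum.elim wo wu) ψ)).foldr pand (tt, true))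

/-- Observable progression iterated over a nonempty observable word `wo :: wos`. -/
noncomputable def fpObsWord [Fintype U] [DecidableEq U] (φ : LTLf (O ⊕ U)) (wo : O → Bool) :
    List (O → Bool) → LTLf (O ⊕ U) × Bool
  | [] => fpObs φ wo
  | w :: ws => fpObsWord (fpObs φ wo).1 w ws

/-- The run of the belief-state construction: `runB φ σo t` is the belief state
`s_t` reached after observably progressing `φ` along the first `t` letters of `σo`. -/
noncomputable def runB [Fintype U] [DecidableEq U] (φ : LTLf (O ⊕ U)) (σo : List (O → Bool)) :
    ℕ → LTLf (O ⊕ U)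
  | 0 => φ
  | t + 1 => (fpObs (runB φ σo t) (σo.getD t (fun _ => false))).1

/-! ### Auxiliary lemmas -/

lemma sat_cons_succ (w : P → Bool) (σ : List (P → Bool)) (ψ : LTLf P) :
    ∀ i, Sat (w :: σ) (i + 1) ψ ↔ Sat σ i ψ := by
  induction ψ with
  | tt => intro i; simp [Sat]
  | ff => intro i; simp [Sat]
  | atom p => intro i; simp [Sat]
  | not φ ih => intro i; simp [Sat, ih]
  | and φ ψ ih1 ih2 => intro i; simp [Sat, ih1, ih2]
  | or φ ψ ih1 ih2 => intro i; simp [Sat, ih1, ih2]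
  | next φ ih =>
      intro i
      simp only [Sat, List.length_cons, ih (i + 1)]
      constructor
      · rintro (h | h)
        · exact Or.inl (by omega)
        · exact Or.inr h
      · rintro (h | h)
        · exact Or.inl (by omega)
        · exact Or.inr h
  | snext φ ih =>
      intro i
      simp only [Sat, List.length_cons, ih (i + 1)]
      constructor
      · rintro ⟨h, h'⟩; exact ⟨by omega, h'⟩
      · rintro ⟨h, h'⟩; exact ⟨by omega, h'⟩
  | fin φ ih =>
      intro i
      simp only [Sat, List.length_cons]
      constructor
      · rintro ⟨j, hij, hjl, hs⟩
        obtain ⟨j', rfl⟩ : ∃ j', j = j' + 1 := ⟨j - 1, by omega⟩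
        exact ⟨j', by omega, by omega, (ih j').mp hs⟩
      · rintro ⟨j, hij, hjl, hs⟩
        exact ⟨j + 1, by omega, by omega, (ih j).mpr hs⟩
  | glob φ ih =>
      intro i
      simp only [Sat, List.length_cons]
      constructor
      · intro h j hij hjl
        exact (ih j).mp (h (j + 1) (by omega) (by omega))
      · intro h j hij hjl
        obtain ⟨j', rfl⟩ : ∃ j', j = j' + 1 := ⟨j - 1, by omega⟩
        exact (ih j').mpr (h j' (by omega) (by omega))
  | untl φ ψ ih1 ih2 =>
      intro i
      simp only [Sat, List.length_cons]
      constructor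
      · rintro ⟨j, hij, hjl, hs, hk⟩
        obtain ⟨j', rfl⟩ : ∃ j', j = j' + 1 := ⟨j - 1, by omega⟩
        refine ⟨j', by omega, by omega, (ih2 j').mp hs, fun k hik hkj => ?_⟩
        exact (ih1 k).mp (hk (k + 1) (by omega) (by omega))
      · rintro ⟨j, hij, hjl, hs, hk⟩
        refine ⟨j + 1, by omega, by omega, (ih2 j).mpr hs, fun k hik hkj => ?_⟩
        obtain ⟨k', rfl⟩ : ∃ k', k = k' + 1 := ⟨k - 1, by omega⟩
        exact (ih1 k').mpr (hk k' (by omega) (by omega))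
  | rels φ ψ ih1 ih2 =>
      intro i
      simp only [Sat, List.length_cons]
      constructor
      · intro h j hij hjl
        rcases h (j + 1) (by omega) (by omega) with hs | ⟨k, hik, hkj, hk⟩
        · exact Or.inl ((ih2 j).mp hs)
        · obtain ⟨k', rfl⟩ : ∃ k', k = k' + 1 := ⟨k - 1, by omega⟩
          exact Or.inr ⟨k', by omega, by omega, (ih1 k').mp hk⟩
      · intro h j hij hjl
        obtain ⟨j', rfl⟩ : ∃ j', j = j' + 1 := ⟨j - 1, by omega⟩
        rcases h j' (by omega) (by omega) with hs | ⟨k, hik, hkj, hk⟩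
        · exact Or.inl ((ih2 j').mpr hs)
        · exact Or.inr ⟨k + 1, by omega, by omega, (ih1 k).mpr hk⟩

lemma sat_fp (w : P → Bool) (σ : List (P → Bool)) (hσ : 0 < σ.length) :
    ∀ φ : LTLf P, Sat (w :: σ) 0 φ ↔ Sat σ 0 (fp w φ).1 := by
  intro φ
  induction φ with
  | tt => simp [Sat, fp]
  | ff => simp [Sat, fp]
  | atom p => by_cases hp : w p = true <;> simp [Sat, fp, hp]
  | not φ ih => simp [Sat, fp, pnot, ih]
  | and φ ψ ih1 ih2 => simp [Sat, fp, pand, ih1, ih2]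
  | or φ ψ ih1 ih2 => simp [Sat, fp, por, ih1, ih2]
  | next φ ih =>
      simp only [Sat, fp, List.length_cons]
      constructor
      · rintro (h | h)
        · omega
        · exact (sat_cons_succ w σ φ 0).mp h
      · intro h; exact Or.inr ((sat_cons_succ w σ φ 0).mpr h)
  | snext φ ih =>
      simp only [Sat, fp, List.length_cons]
      constructor
      · rintro ⟨-, h⟩; exact (sat_cons_succ w σ φ 0).mp h
      · intro h; exact ⟨by omega, (sat_cons_succ w σ φ 0).mpr h⟩
  | fin φ ih =>
      simp only [Sat, fp, por, List.length_cons]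
      constructor
      · rintro ⟨j, -, hjl, hs⟩
        cases j with
        | zero => exact Or.inl (ih.mp hs)
        | succ j' => exact Or.inr ⟨j', by omega, by omega, (sat_cons_succ w σ φ j').mp hs⟩
      · rintro (hs | ⟨j, -, hjl, hs⟩)
        · exact ⟨0, le_refl 0, by omega, ih.mpr hs⟩
        · exact ⟨j + 1, by omega, by omega, (sat_cons_succ w σ φ j).mpr hs⟩
  | glob φ ih =>
      simp only [Sat, fp, pand, List.length_cons]
      constructor
      · intro hG
        refine ⟨ih.mp (hG 0 (le_refl 0) (by omega)), fun j _ hjl => ?_⟩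
        exact (sat_cons_succ w σ φ j).mp (hG (j + 1) (by omega) (by omega))
      · rintro ⟨h0, hrest⟩ j _ hjl
        cases j with
        | zero => exact ih.mpr h0
        | succ j' => exact (sat_cons_succ w σ φ j').mpr (hrest j' (by omega) (by omega))
  | untl φ ψ ih1 ih2 =>
      simp only [Sat, fp, por, pand, List.length_cons]
      constructor
      · rintro ⟨j, -, hjl, hs, hk⟩
        cases j with
        | zero => exact Or.inl (ih2.mp hs)
        | succ j' =>
            refine Or.inr ⟨ih1.mp (hk 0 (le_refl 0) (by omega)), j', by omega, by omega,
              (sat_cons_succ w σ ψ j').mp hs, fun k _ hkj => ?_⟩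
            exact (sat_cons_succ w σ φ k).mp (hk (k + 1) (by omega) (by omega))
      · rintro (hs | ⟨h0, j, -, hjl, hs, hk⟩)
        · exact ⟨0, le_refl 0, by omega, ih2.mpr hs, fun k _ hk0 => absurd hk0 (by omega)⟩
        · refine ⟨j + 1, by omega, by omega, (sat_cons_succ w σ ψ j).mpr hs, fun k _ hkj => ?_⟩
          cases k with
          | zero => exact ih1.mpr h0
          | succ k' => exact (sat_cons_succ w σ φ k').mpr (hk k' (by omega) (by omega))
  | rels φ ψ ih1 ih2 =>
      simp only [Sat, fp, pand, por, List.length_cons]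
      constructor
      · intro h
        refine ⟨ih2.mp ?_, ?_⟩
        · rcases h 0 (le_refl 0) (by omega) with hs | ⟨k, -, hk0, -⟩
          · exact hs
          · omega
        · by_cases h0 : Sat (w :: σ) 0 φ
          · exact Or.inl (ih1.mp h0)
          · refine Or.inr (fun j _ hjl => ?_)
            rcases h (j + 1) (by omega) (by omega) with hs | ⟨k, -, hkj, hk⟩
            · exact Or.inl ((sat_cons_succ w σ ψ j).mp hs)
            · cases k with
              | zero => exact absurd hk h0
              | succ k' =>
                  exact Or.inr ⟨k', by omega, by omega, (sat_cons_succ w σ φ k').mp hk⟩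
      · rintro ⟨hψ, hφ | hR⟩ j _ hjl
        · cases j with
          | zero => exact Or.inl (ih2.mpr hψ)
          | succ j' => exact Or.inr ⟨0, le_refl 0, by omega, ih1.mpr hφ⟩
        · cases j with
          | zero => exact Or.inl (ih2.mpr hψ)
          | succ j' =>
              rcases hR j' (by omega) (by omega) with hs | ⟨k, -, hkj, hk⟩
              · exact Or.inl ((sat_cons_succ w σ ψ j').mpr hs)
              · exact Or.inr ⟨k + 1, by omega, by omega, (sat_cons_succ w σ φ k).mpr hk⟩

lemma sat_foldr_pand (τ : List (P → Bool)) (l : List (LTLf P × Bool)) :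
    Sat τ 0 (l.foldr pand (tt, true)).1 ↔ ∀ x ∈ l, Sat τ 0 x.1 := by
  induction l with
  | nil => simp [Sat]
  | cons a l ih => simp [pand, Sat, ih]

lemma sat_fpObs [Fintype U] [DecidableEq U] (ψ : LTLf (O ⊕ U)) (wo : O → Bool)
    (τ : List ((O ⊕ U) → Bool)) :
    Sat τ 0 (fpObs ψ wo).1 ↔ ∀ wu : U → Bool, Sat τ 0 (fp (Sum.elim wo wu) ψ).1 := by
  rw [fpObs, sat_foldr_pand]
  simp

end LTLf
/-- invariant of the belief-state run (key claim of the proof of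
Theorem 1).  `runB φ σo t` is the belief state `s_t`; for every `t < n` and
every full word `τ` of length `n - t` whose observable restriction is the
suffix `σo(t..)`, we have `τ,0 ⊨ s_t` iff for every sequence of `t`
unobservable assignments the corresponding completed prefix concatenated with
`τ` satisfies `φ` at position `0`. -/
theorem beliefState_run_invariant {O U : Type} [Fintype O] [DecidableEq O]
    [Fintype U] [DecidableEq U]
    (φ : LTLf (O ⊕ U)) (σo : List (O → Bool)) :
    ∀ t, t < σo.length →
      ∀ τ : List ((O ⊕ U) → Bool), τ.length = σo.length - t →
        (∀ j, j < τ.length → ∀ o : O,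
          τ.getD j (fun _ => false) (Sum.inl o) =
            σo.getD (t + j) (fun _ => false) o) →
        (LTLf.Sat τ 0 (LTLf.runB φ σo t) ↔
          ∀ wus : List (U → Bool), wus.length = t →
            LTLf.Sat
              ((List.zipWith (fun wo wu => Sum.elim wo wu) (σo.take t) wus) ++ τ)
              0 φ) := by
  intro t
  induction t with
  | zero =>
      intro _ τ _ _
      simp only [LTLf.runB, List.take_zero, List.zipWith_nil_left, List.nil_append,
        List.length_eq_zero_iff]
      constructor
      · intro h wus hl; exact h
      · intro h; exact h [] rfl
  | succ t ih =>
      intro ht τ hτlen hτobs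
      have ht' : t < σo.length := by omega
      have hτpos : 0 < τ.length := by omega
      set wot := σo.getD t (fun _ => false) with hwot
      have hrun : LTLf.runB φ σo (t + 1) = (LTLf.fpObs (LTLf.runB φ σo t) wot).1 := rfl
      rw [hrun, LTLf.sat_fpObs]
      have key : ∀ wu : U → Bool,
          (LTLf.Sat τ 0 (LTLf.fp (Sum.elim wot wu) (LTLf.runB φ σo t)).1 ↔
            ∀ ws : List (U → Bool), ws.length = t →
              LTLf.Sat (List.zipWith (fun wo wu => Sum.elim wo wu) (σo.take t) ws ++
                (Sum.elim wot wu :: τ)) 0 φ) := by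
        intro wu
        rw [← LTLf.sat_fp _ _ hτpos]
        refine ih ht' (Sum.elim wot wu :: τ) (by simp only [List.length_cons]; omega) ?_
        intro j hj o
        cases j with
        | zero => simp [hwot]
        | succ j' =>
            simp only [List.getD_cons_succ]
            have e : t + (j' + 1) = t + 1 + j' := by omega
            rw [e]
            exact hτobs j' (by simpa using hj) o
      simp only [key]
      have htake : σo.take (t + 1) = σo.take t ++ [wot] := by
        rw [List.take_succ, List.getElem?_eq_getElem ht', hwot,
          List.getD_eq_getElem _ _ ht']
        simp
      have hlen' : ∀ ws : List (U → Bool), ws.length = t →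
          (σo.take t).length = ws.length := by
        intro ws hws; rw [List.length_take, hws]; omega
      constructor
      · intro H wus hlen
        rcases List.eq_nil_or_concat wus with rfl | ⟨ws, wu, rfl⟩
        · simp at hlen
        · have hws : ws.length = t := by simpa using hlen
          rw [List.concat_eq_append, htake,
            List.zipWith_append (hlen' ws hws), List.append_assoc]
          simpa using H wu ws hws
      · intro H wu ws hws
        have := H (ws ++ [wu]) (by simp [hws])
        rw [htake, List.zipWith_append (hlen' ws hws), List.append_assoc] at this
        simpa using this
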